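/- arXiv:2203.04536 — 3 statements merged into one kernel-verified Lean document; each statement's English description precedes it below -/
import Mathlib

section
/- There exists a constant c > 0 such that for all M₁ > 0, M₂ > 0, and ε ∈ (0, M₁M₂/2), there exist a nonempty finite set X, a probability distribution μ over X, and function classes F₁ ⊆ [−M₁,M₁]^X and F₂ ⊆ [−M₂,M₂]^X with F₂ finite, such that log N_{μ,F₂}(F₁, ε) ≥ c · (1 + log|F₂|) · (M₁M₂/ε)² · ( log(M₁M₂/ε) )^{−1}. -/
open scoped ENNReal Pointwise

noncomputable section

namespace OI

/-- Expectation of a real-valued function under a probability mass function. -/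
def pexp {α : Type*} (q : PMF α) (f : α → ℝ) : ℝ := ∑' a, (q a).toReal * f a

/-- Inner product of two functions w.r.t. the distribution `μ`. -/
def inn {X : Type*} (μ : PMF X) (f g : X → ℝ) : ℝ := pexp μ fun x => f x * g x

/-- Dual Minkowski (semi)norm of `f` w.r.t. the class `F`. -/
def dnorm {X : Type*} (μ : PMF X) (F : Set (X → ℝ)) (f : X → ℝ) : ℝ :=
  sSup ((fun g => |inn μ f g|) '' F)

/-- `C` is an ε-covering of `G` w.r.t. the seminorm defined by `F`. -/
def IsCover {X : Type*} (μ : PMF X) (F G : Set (X → ℝ)) (ε : ℝ) (C : Set (X → ℝ)) : Prop :=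
  C ⊆ G ∧ ∀ g ∈ G, ∃ c ∈ C, dnorm μ F (g - c) ≤ ε

/-- Covering number `N_{μ,F}(G, ε)` (`⊤` if no finite covering exists). -/
def covN {X : Type*} (μ : PMF X) (F G : Set (X → ℝ)) (ε : ℝ) : ℕ∞ :=
  ⨅ (C : Set (X → ℝ)) (_ : IsCover μ F G ε C), C.encard

/-- Base-2 logarithm of an extended natural number (junk value on `⊤`). -/
def elog2 (N : ℕ∞) : ℝ := Real.logb 2 (N.toNat : ℝ)

/-- Bernoulli distribution on `Bool` with mean (the truncation to `[0,1]` of) `r`. -/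
def bern (r : ℝ) : PMF Bool :=
  PMF.ofFintype (fun b => cond b (min (ENNReal.ofReal r) 1) (1 - min (ENNReal.ofReal r) 1))
    (by simp [add_tsub_cancel_of_le (min_le_right (ENNReal.ofReal r) 1)])

/-- The distribution `μ_p` of individual-outcome pairs. -/
def exDist {X : Type*} (μ : PMF X) (p : X → ℝ) : PMF (X × Bool) :=
  μ.bind fun x => (bern (p x)).map fun o => (x, o)

/-- `n` i.i.d. samples from `q`. -/
def iid {α : Type*} (q : PMF α) : (n : ℕ) → PMF (Fin n → α)
  | 0 => PMF.pure Fin.elim0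
  | n + 1 => (iid q n).bind fun v => q.map fun a => Fin.cons a v

/-- Probability of an event under a PMF. -/
def prob {α : Type*} (q : PMF α) (E : Set α) : ℝ≥0∞ := q.toOuterMeasure E

/-- A (possibly randomized) `n`-sample learner. -/
abbrev Learner (X : Type*) (n : ℕ) := (Fin n → X × Bool) → PMF (X → ℝ)

/-- Distribution of the learner output on `n` i.i.d. samples from `μ_{p*}`. -/
def outDist {X : Type*} (μ : PMF X) (pstar : X → ℝ) {n : ℕ} (A : Learner X n) :
    PMF (X → ℝ) :=
  (iid (exDist μ pstar) n).bind A

/-- `p` is a predictor, i.e. takes values in `[0,1]`. -/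
def Predictor {X : Type*} (p : X → ℝ) : Prop := ∀ x, p x ∈ Set.Icc (0 : ℝ) 1

/-- `d` takes values in `[-1,1]`. -/
def Dist1 {X : Type*} (d : X → ℝ) : Prop := ∀ x, d x ∈ Set.Icc (-1 : ℝ) 1

/-- The class `[0,1]^X` of all predictors. -/
def allPred (X : Type*) : Set (X → ℝ) := {p | Predictor p}

/-- The learner `A` succeeds for target `pstar`: with probability at least `1 - δ` it outputs
a predictor whose maximum distinguishing advantage w.r.t. `pstar` over `D` is at most `ε`. -/
def Achieves {X : Type*} (μ : PMF X) (D : Set (X → ℝ)) (ε δ : ℝ) (pstar : X → ℝ) {n : ℕ}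
    (A : Learner X n) : Prop :=
  ENNReal.ofReal (1 - δ) ≤
    prob (outDist μ pstar A) {p | Predictor p ∧ dnorm μ D (p - pstar) ≤ ε}

/-- The agnostic benchmark `inf_{p' ∈ P} ‖p' - pstar‖_{μ,D}`. -/
def agTarget {X : Type*} (μ : PMF X) (P D : Set (X → ℝ)) (pstar : X → ℝ) : ℝ :=
  sInf ((fun p' => dnorm μ D (p' - pstar)) '' P)

/-- The learner `A` succeeds agnostically for target `pstar`. -/
def AchievesAg {X : Type*} (μ : PMF X) (P D : Set (X → ℝ)) (ε δ : ℝ) (pstar : X → ℝ) {n : ℕ}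
    (A : Learner X n) : Prop :=
  ENNReal.ofReal (1 - δ) ≤
    prob (outDist μ pstar A)
      {p | Predictor p ∧ dnorm μ D (p - pstar) ≤ agTarget μ P D pstar + ε}

/-- Distribution-specific realizable OI learner. -/
def DSRL {X : Type*} (μ : PMF X) (P D : Set (X → ℝ)) (ε δ : ℝ) (n : ℕ)
    (A : Learner X n) : Prop :=
  ∀ pstar ∈ P, Achieves μ D ε δ pstar A

/-- Distribution-specific agnostic OI learner. -/
def DSAL {X : Type*} (μ : PMF X) (P D : Set (X → ℝ)) (ε δ : ℝ) (n : ℕ)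
    (A : Learner X n) : Prop :=
  ∀ pstar : X → ℝ, Predictor pstar → AchievesAg μ P D ε δ pstar A

/-- Distribution-free realizable OI learner. -/
def DFRL {X : Type*} (P D : Set (X → ℝ)) (ε δ : ℝ) (n : ℕ) (A : Learner X n) : Prop :=
  ∀ μ : PMF X, DSRL μ P D ε δ n A

/-- Distribution-free agnostic OI learner. -/
def DFAL {X : Type*} (P D : Set (X → ℝ)) (ε δ : ℝ) (n : ℕ) (A : Learner X n) : Prop :=
  ∀ μ : PMF X, DSAL μ P D ε δ n A

/-- Sample complexity of distribution-specific realizable OI. -/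
def SAMPDSR {X : Type*} (μ : PMF X) (P D : Set (X → ℝ)) (ε δ : ℝ) : ℕ∞ :=
  ⨅ (n : ℕ) (_ : ∃ A : Learner X n, DSRL μ P D ε δ n A), (n : ℕ∞)

/-- Sample complexity of distribution-specific agnostic OI. -/
def SAMPDSA {X : Type*} (μ : PMF X) (P D : Set (X → ℝ)) (ε δ : ℝ) : ℕ∞ :=
  ⨅ (n : ℕ) (_ : ∃ A : Learner X n, DSAL μ P D ε δ n A), (n : ℕ∞)

/-- Sample complexity of distribution-free realizable OI. -/
def SAMPDFR {X : Type*} (P D : Set (X → ℝ)) (ε δ : ℝ) : ℕ∞ :=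
  ⨅ (n : ℕ) (_ : ∃ A : Learner X n, DFRL P D ε δ n A), (n : ℕ∞)

/-- Sample complexity of distribution-free agnostic OI. -/
def SAMPDFA {X : Type*} (P D : Set (X → ℝ)) (ε δ : ℝ) : ℕ∞ :=
  ⨅ (n : ℕ) (_ : ∃ A : Learner X n, DFAL P D ε δ n A), (n : ℕ∞)

/-- The points `x 0, …, x (n-1)` are `γ`-fat shattered by `F`. -/
def Shatters {X : Type*} (F : Set (X → ℝ)) (γ : ℝ) {n : ℕ} (x : Fin n → X) : Prop :=
  ∃ r : Fin n → ℝ, ∀ b : Fin n → Bool, ∃ f ∈ F,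
    ∀ i, γ ≤ (if b i then (1 : ℝ) else -1) * (f (x i) - r i)

/-- The `γ`-fat-shattering dimension of `F`. -/
def fatDim {X : Type*} (F : Set (X → ℝ)) (γ : ℝ) : ℕ∞ :=
  ⨆ (n : ℕ) (_ : ∃ x : Fin n → X, Shatters F γ x), (n : ℕ∞)

end OI


open OI

namespace S7

open Finset

/-- Fourier character on the hypercube. -/
def chi {m : ℕ} (a x : Fin m → Bool) : ℝ :=
  ∏ i, (if a i = true ∧ x i = true then (-1 : ℝ) else 1)

lemma chi_abs {m : ℕ} (a x : Fin m → Bool) : |chi a x| = 1 := by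
  rw [chi, Finset.abs_prod]
  exact Finset.prod_eq_one fun i _ => by split <;> simp

lemma chi_orth {m : ℕ} (x y : Fin m → Bool) :
    ∑ a : Fin m → Bool, chi a x * chi a y = if x = y then (2 ^ m : ℝ) else 0 := by
  have h1 : ∀ a : Fin m → Bool, chi a x * chi a y =
      ∏ i, ((if a i = true ∧ x i = true then (-1 : ℝ) else 1) *
        (if a i = true ∧ y i = true then (-1 : ℝ) else 1)) := by
    intro a; rw [chi, chi, Finset.prod_mul_distrib]
  rw [Finset.sum_congr rfl fun a _ => h1 a, ← Fintype.prod_sum fun (i : Fin m) (b : Bool) =>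
      ((if b = true ∧ x i = true then (-1 : ℝ) else 1) *
        (if b = true ∧ y i = true then (-1 : ℝ) else 1))]
  have h2 : ∀ i : Fin m, (∑ b : Bool, ((if b = true ∧ x i = true then (-1 : ℝ) else 1) *
      (if b = true ∧ y i = true then (-1 : ℝ) else 1))) = if x i = y i then 2 else 0 := by
    intro i
    rw [Fintype.sum_bool]
    cases hx : x i <;> cases hy : y i <;> norm_num
  rw [Finset.prod_congr rfl fun i _ => h2 i]
  by_cases hxy : x = y
  · subst hxy; simp [Finset.prod_const]
  · obtain ⟨i, hi⟩ := Function.ne_iff.mp hxy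
    rw [if_neg hxy]
    exact Finset.prod_eq_zero (Finset.mem_univ i) (by rw [if_neg hi])

lemma chi_delta {m : ℕ} (a : Fin m → Bool) (i : Fin m) :
    chi a (fun j => decide (j = i)) = if a i = true then (-1 : ℝ) else 1 := by
  rw [chi, Finset.prod_eq_single i]
  · simp
  · intro j _ hji
    simp [hji]
  · simp

lemma parseval {m : ℕ} (v : (Fin m → Bool) → ℝ) :
    ∑ a : Fin m → Bool, (∑ x, v x * chi a x) ^ 2 = 2 ^ m * ∑ x, v x ^ 2 := by
  have h1 : ∀ a : Fin m → Bool, (∑ x, v x * chi a x) ^ 2 =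
      ∑ x, ∑ y, v x * v y * (chi a x * chi a y) := by
    intro a
    rw [sq, Finset.sum_mul_sum]
    exact Finset.sum_congr rfl fun x _ => Finset.sum_congr rfl fun y _ => by ring
  rw [Finset.sum_congr rfl fun a _ => h1 a, Finset.sum_comm]
  have h2 : ∀ x : Fin m → Bool,
      (∑ a : Fin m → Bool, ∑ y, v x * v y * (chi a x * chi a y)) = v x * v x * 2 ^ m := by
    intro x
    rw [Finset.sum_comm]
    have h3 : ∀ y, (∑ a : Fin m → Bool, v x * v y * (chi a x * chi a y))
        = v x * v y * (if x = y then (2 ^ m : ℝ) else 0) := by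
      intro y; rw [← Finset.mul_sum, chi_orth]
    rw [Finset.sum_congr rfl fun y _ => h3 y]
    simp only [mul_ite, mul_zero]
    rw [Finset.sum_ite_eq]
    simp
  rw [Finset.sum_congr rfl fun x _ => h2 x]
  rw [Finset.sum_congr rfl (g := fun x => v x ^ 2 * 2 ^ m) fun x _ => by ring,
    ← Finset.sum_mul]
  ring

/-- The scaled sign function associated to a boolean function. -/
def Efun (M : ℝ) {m : ℕ} (σ : (Fin m → Bool) → Bool) : (Fin m → Bool) → ℝ :=
  fun x => if σ x = true then M else -M

def F1 (M : ℝ) (m : ℕ) : Set ((Fin m → Bool) → ℝ) :=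
  Set.range fun σ : (Fin m → Bool) → Bool => Efun M σ

def F2 (M : ℝ) (m : ℕ) : Set ((Fin m → Bool) → ℝ) :=
  Set.range fun a : Fin m → Bool => fun x => M * chi a x

def unif (m : ℕ) : PMF (Fin m → Bool) := PMF.uniformOfFintype _

lemma card_V (m : ℕ) : Fintype.card (Fin m → Bool) = 2 ^ m := by
  simp [Fintype.card_fun]

lemma inn_unif {m : ℕ} (f g : (Fin m → Bool) → ℝ) :
    OI.inn (unif m) f g = ((2 : ℝ) ^ m)⁻¹ * ∑ x, f x * g x := by
  rw [OI.inn, OI.pexp, tsum_fintype, Finset.mul_sum]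
  refine Finset.sum_congr rfl fun x _ => ?_
  congr 1
  rw [unif, PMF.uniformOfFintype_apply, ENNReal.toReal_inv, card_V]
  norm_num

lemma le_dnorm {m : ℕ} (M₂ : ℝ) (f : (Fin m → Bool) → ℝ) (a : Fin m → Bool) :
    |OI.inn (unif m) f fun x => M₂ * chi a x| ≤ OI.dnorm (unif m) (F2 M₂ m) f := by
  apply le_csSup
  · exact ((Set.finite_range _).image _).bddAbove
  · exact ⟨_, ⟨a, rfl⟩, rfl⟩

lemma dnorm_zero {X : Type} (μ : PMF X) (F : Set (X → ℝ)) (hF : F.Nonempty) :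
    OI.dnorm μ F 0 = 0 := by
  have h0 : ∀ f, |OI.inn μ (0 : X → ℝ) f| = 0 := by
    intro f; rw [OI.inn, OI.pexp]; simp
  rw [OI.dnorm]
  have himg : (fun g => |OI.inn μ (0 : X → ℝ) g|) '' F = {0} := by
    apply Set.Subsingleton.eq_singleton_of_mem
    · rintro u ⟨f, _, rfl⟩ w ⟨f', _, rfl⟩
      show |OI.inn μ 0 f| = |OI.inn μ 0 f'|
      rw [h0, h0]
    · obtain ⟨f, hf⟩ := hF; exact ⟨f, hf, h0 f⟩
  rw [himg, csSup_singleton]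

lemma hamming_bound {m : ℕ} {M₁ M₂ ε : ℝ} (hM₁ : 0 < M₁) (hM₂ : 0 < M₂)
    (σ τ : (Fin m → Bool) → Bool)
    (h : OI.dnorm (unif m) (F2 M₂ m) (Efun M₁ σ - Efun M₁ τ) ≤ ε) :
    4 * M₁ ^ 2 * M₂ ^ 2 * (((Finset.univ.filter fun x => σ x ≠ τ x).card : ℕ) : ℝ)
      ≤ ε ^ 2 * ((2 : ℝ) ^ m) ^ 2 := by
  classical
  set w : (Fin m → Bool) → ℝ := fun x => Efun M₁ σ x - Efun M₁ τ x with hw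
  have hNpos : (0 : ℝ) < 2 ^ m := by positivity
  have hSa : ∀ a : Fin m → Bool, (∑ x, w x * chi a x) ^ 2 ≤ (ε * 2 ^ m / M₂) ^ 2 := by
    intro a
    have h1 : |OI.inn (unif m) (Efun M₁ σ - Efun M₁ τ) fun x => M₂ * chi a x| ≤ ε :=
      le_trans (le_dnorm M₂ _ a) h
    rw [inn_unif] at h1
    have h2 : (∑ x, (Efun M₁ σ - Efun M₁ τ) x * (M₂ * chi a x))
        = M₂ * ∑ x, w x * chi a x := by
      rw [Finset.mul_sum]
      exact Finset.sum_congr rfl fun x _ => by simp only [Pi.sub_apply, hw]; ring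
    rw [h2] at h1
    set S : ℝ := ∑ x, w x * chi a x with hS
    have h3 : |S| ≤ ε * 2 ^ m / M₂ := by
      rw [abs_mul, abs_mul, abs_of_pos (inv_pos.mpr hNpos), abs_of_pos hM₂] at h1
      rw [le_div_iff₀ hM₂]
      calc |S| * M₂ = 2 ^ m * (((2 : ℝ) ^ m)⁻¹ * (M₂ * |S|)) := by
            field_simp
        _ ≤ 2 ^ m * ε := mul_le_mul_of_nonneg_left h1 hNpos.le
        _ = ε * 2 ^ m := mul_comm _ _
    calc S ^ 2 = |S| ^ 2 := (sq_abs S).symm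
      _ ≤ (ε * 2 ^ m / M₂) ^ 2 := pow_le_pow_left₀ (abs_nonneg S) h3 2
  have hsum : ∑ a : Fin m → Bool, (∑ x, w x * chi a x) ^ 2
      ≤ (2 : ℝ) ^ m * (ε * 2 ^ m / M₂) ^ 2 := by
    calc ∑ a : Fin m → Bool, (∑ x, w x * chi a x) ^ 2
        ≤ ∑ _a : Fin m → Bool, (ε * 2 ^ m / M₂) ^ 2 :=
          Finset.sum_le_sum fun a _ => hSa a
      _ = (Fintype.card (Fin m → Bool) : ℝ) * (ε * 2 ^ m / M₂) ^ 2 := by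
          rw [Finset.sum_const, Finset.card_univ, nsmul_eq_mul]
      _ = (2 : ℝ) ^ m * (ε * 2 ^ m / M₂) ^ 2 := by rw [card_V]; norm_num
  have hpars := parseval w
  have hw2 : ∑ x, w x ^ 2
      = 4 * M₁ ^ 2 * (((Finset.univ.filter fun x => σ x ≠ τ x).card : ℕ) : ℝ) := by
    have hpt : ∀ x : Fin m → Bool, w x ^ 2 = if σ x ≠ τ x then 4 * M₁ ^ 2 else 0 := by
      intro x
      by_cases hx : σ x = τ x
      · simp [hw, Efun, hx]
      · rw [if_pos hx]
        rcases Bool.eq_false_or_eq_true (σ x) with h1 | h1 <;>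
          rcases Bool.eq_false_or_eq_true (τ x) with h2 | h2 <;>
          simp [hw, Efun, h1, h2] at hx ⊢ <;> ring
    rw [Finset.sum_congr rfl fun x _ => hpt x, ← Finset.sum_filter, Finset.sum_const,
      nsmul_eq_mul]
    ring
  have hcomb : (2 : ℝ) ^ m *
      (4 * M₁ ^ 2 * (((Finset.univ.filter fun x => σ x ≠ τ x).card : ℕ) : ℝ))
      ≤ (2 : ℝ) ^ m * (ε * 2 ^ m / M₂) ^ 2 := by
    rw [← hw2, ← hpars]; exact hsum
  have hmain := le_of_mul_le_mul_left hcomb hNpos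
  have h4 : 4 * M₁ ^ 2 * (((Finset.univ.filter fun x => σ x ≠ τ x).card : ℕ) : ℝ) * M₂ ^ 2
      ≤ (ε * 2 ^ m) ^ 2 := by
    rw [div_pow] at hmain
    calc 4 * M₁ ^ 2 * (((Finset.univ.filter fun x => σ x ≠ τ x).card : ℕ) : ℝ) * M₂ ^ 2
        ≤ (ε * 2 ^ m) ^ 2 / M₂ ^ 2 * M₂ ^ 2 := by
          apply mul_le_mul_of_nonneg_right hmain (by positivity)
      _ = (ε * 2 ^ m) ^ 2 := by field_simp
  calc 4 * M₁ ^ 2 * M₂ ^ 2 * (((Finset.univ.filter fun x => σ x ≠ τ x).card : ℕ) : ℝ)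
      = 4 * M₁ ^ 2 * (((Finset.univ.filter fun x => σ x ≠ τ x).card : ℕ) : ℝ) * M₂ ^ 2 := by
        ring
    _ ≤ (ε * 2 ^ m) ^ 2 := h4
    _ = ε ^ 2 * ((2 : ℝ) ^ m) ^ 2 := by ring

lemma card_ball {α : Type*} [Fintype α] [DecidableEq α] (τ : α → Bool) (d : ℕ) :
    (Finset.univ.filter fun σ : α → Bool =>
      (Finset.univ.filter fun x => σ x ≠ τ x).card ≤ d).card
      ≤ ∑ i ∈ Finset.range (d + 1), (Fintype.card α).choose i := by
  classical
  have hcard : ((Finset.range (d + 1)).biUnion fun i =>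
      (Finset.univ : Finset α).powersetCard i).card
      = ∑ i ∈ Finset.range (d + 1), (Fintype.card α).choose i := by
    rw [Finset.card_biUnion]
    · exact Finset.sum_congr rfl fun i _ => by
        rw [Finset.card_powersetCard, Finset.card_univ]
    · intro i _ j _ hij
      simp only [Finset.disjoint_left, Finset.mem_powersetCard]
      rintro s ⟨_, hi⟩ ⟨_, hj⟩
      exact hij (hi ▸ hj ▸ rfl)
  rw [← hcard]
  apply Finset.card_le_card_of_injOn (fun σ => Finset.univ.filter fun x => σ x ≠ τ x)
  · intro σ hσ
    simp only [Finset.mem_coe, Finset.mem_filter, Finset.mem_univ, true_and] at hσ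
    simp only [Finset.mem_coe, Finset.mem_biUnion, Finset.mem_range, Finset.mem_powersetCard]
    exact ⟨_, Nat.lt_succ_of_le hσ, Finset.subset_univ _, rfl⟩
  · intro σ1 _ σ2 _ heq
    funext x
    have hx := Finset.ext_iff.mp heq x
    simp only [Finset.mem_filter, Finset.mem_univ, true_and] at hx
    cases h1 : σ1 x <;> cases h2 : σ2 x <;> cases h3 : τ x <;> simp_all

lemma sum_choose_le (N d : ℕ) (hd : d ≤ N) :
    ((∑ i ∈ Finset.range (d + 1), N.choose i : ℕ) : ℝ)
      ≤ 1024 ^ d * (1024 / 1023) ^ N := by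
  set p : ℝ := 1 / 1024 with hp
  set q : ℝ := 1023 / 1024 with hq
  have hterm : ∀ i ∈ Finset.range (d + 1),
      (N.choose i : ℝ) * (p ^ d * q ^ (N - d)) ≤ p ^ i * q ^ (N - i) * N.choose i := by
    intro i hi
    rw [Finset.mem_range, Nat.lt_succ_iff] at hi
    have h1 : p ^ d * q ^ (N - d) ≤ p ^ i * q ^ (N - i) := by
      have e1 : p ^ d = p ^ i * p ^ (d - i) := by rw [← pow_add]; congr 1; omega
      have e2 : q ^ (N - i) = q ^ (N - d) * q ^ (d - i) := by rw [← pow_add]; congr 1; omega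
      calc p ^ d * q ^ (N - d) = p ^ i * q ^ (N - d) * p ^ (d - i) := by
            rw [e1]; ring
        _ ≤ p ^ i * q ^ (N - d) * q ^ (d - i) := by
            apply mul_le_mul_of_nonneg_left
              (pow_le_pow_left₀ (by norm_num [hp]) (by norm_num [hp, hq]) _)
              (by positivity)
        _ = p ^ i * q ^ (N - i) := by rw [e2]; ring
    calc (N.choose i : ℝ) * (p ^ d * q ^ (N - d))
        ≤ (N.choose i : ℝ) * (p ^ i * q ^ (N - i)) :=
          mul_le_mul_of_nonneg_left h1 (by positivity)
      _ = p ^ i * q ^ (N - i) * N.choose i := by ring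
  have hsum := Finset.sum_le_sum hterm
  rw [← Finset.sum_mul] at hsum
  have h2 : ∑ i ∈ Finset.range (d + 1), p ^ i * q ^ (N - i) * (N.choose i : ℝ)
      ≤ ∑ i ∈ Finset.range (N + 1), p ^ i * q ^ (N - i) * (N.choose i : ℝ) := by
    apply Finset.sum_le_sum_of_subset_of_nonneg
    · exact Finset.range_subset_range.mpr (by omega)
    · intro i _ _; positivity
  have h3 : ∑ i ∈ Finset.range (N + 1), p ^ i * q ^ (N - i) * (N.choose i : ℝ) = 1 := by
    rw [← add_pow]
    norm_num [hp, hq]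
  have hb : (∑ i ∈ Finset.range (d + 1), (N.choose i : ℝ)) * (p ^ d * q ^ (N - d)) ≤ 1 := by
    calc (∑ i ∈ Finset.range (d + 1), (N.choose i : ℝ)) * (p ^ d * q ^ (N - d))
        ≤ ∑ i ∈ Finset.range (N + 1), p ^ i * q ^ (N - i) * (N.choose i : ℝ) :=
          le_trans hsum h2
      _ = 1 := h3
  have hpq : (0 : ℝ) < p ^ d * q ^ (N - d) := by positivity
  have hble : (∑ i ∈ Finset.range (d + 1), (N.choose i : ℝ)) ≤ 1 / (p ^ d * q ^ (N - d)) :=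
    (le_div_iff₀ hpq).mpr hb
  have heq : 1 / (p ^ d * q ^ (N - d)) = 1024 ^ d * (1024 / 1023) ^ (N - d) := by
    rw [hp, hq, one_div, mul_inv, ← inv_pow, ← inv_pow]
    norm_num
  push_cast
  calc (∑ i ∈ Finset.range (d + 1), (N.choose i : ℝ))
      ≤ 1024 ^ d * (1024 / 1023) ^ (N - d) := heq ▸ hble
    _ ≤ 1024 ^ d * (1024 / 1023) ^ N := by
        apply mul_le_mul_of_nonneg_left
          (pow_le_pow_right₀ (by norm_num) (by omega)) (by positivity)

lemma ratio_pow_le (N : ℕ) : ((1024 : ℝ) / 1023) ^ N ≤ 2 ^ (N / 512 + 1) := by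
  have h1 : ((1024 : ℝ) / 1023) ≤ Real.exp (1 / 1023) := by
    rw [show (1024 : ℝ) / 1023 = 1 / 1023 + 1 by norm_num]
    exact Real.add_one_le_exp _
  have h2 : ((1024 : ℝ) / 1023) ^ N ≤ Real.exp ((N : ℝ) / 1023) := by
    calc ((1024 : ℝ) / 1023) ^ N ≤ Real.exp (1 / 1023) ^ N :=
          pow_le_pow_left₀ (by norm_num) h1 N
      _ = Real.exp ((N : ℝ) * (1 / 1023)) := (Real.exp_nat_mul _ N).symm
      _ = Real.exp ((N : ℝ) / 1023) := by ring_nf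
  have h512 : (N : ℝ) < 512 * ((N / 512 : ℕ) : ℝ) + 512 := by
    have : N < 512 * (N / 512) + 512 := by omega
    exact_mod_cast this
  have hlog : (0.6931471803 : ℝ) < Real.log 2 := Real.log_two_gt_d9
  calc ((1024 : ℝ) / 1023) ^ N ≤ Real.exp ((N : ℝ) / 1023) := h2
    _ ≤ Real.exp ((((N / 512 : ℕ) : ℝ) + 1) * Real.log 2) := by
        apply Real.exp_le_exp.mpr
        nlinarith [(Nat.cast_nonneg (N / 512) : (0 : ℝ) ≤ ((N / 512 : ℕ) : ℝ)),
          mul_nonneg (by positivity : (0 : ℝ) ≤ ((N / 512 : ℕ) : ℝ) + 1)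
            (by linarith : (0 : ℝ) ≤ Real.log 2 - 0.6931471803)]
    _ = 2 ^ (N / 512 + 1) := by
        rw [show (((N / 512 : ℕ) : ℝ) + 1) * Real.log 2
            = ((N / 512 + 1 : ℕ) : ℝ) * Real.log 2 by push_cast; ring,
          Real.exp_nat_mul, Real.exp_log two_pos]

end S7

open S7

set_option maxHeartbeats 2000000 in
/-- near-tightness of the metric entropy duality variant: there is `c > 0` such
that for all `M₁, M₂ > 0` and `ε ∈ (0, M₁M₂/2)` there are a nonempty finite set `X`, a
distribution `μ` on `X`, and classes `F₁ ⊆ [−M₁,M₁]^X`, `F₂ ⊆ [−M₂,M₂]^X` with `F₂` finite and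
`log N_{μ,F₂}(F₁,ε) ≥ c (1 + log|F₂|) (M₁M₂/ε)² (log(M₁M₂/ε))⁻¹`. -/
theorem statement_7 :
    ∃ c : ℝ, 0 < c ∧
      ∀ M₁ M₂ ε : ℝ, 0 < M₁ → 0 < M₂ → ε ∈ Set.Ioo 0 (M₁ * M₂ / 2) →
        ∃ (X : Type) (_ : Nonempty X) (_ : Finite X) (μ : PMF X)
          (F₁ F₂ : Set (X → ℝ)),
          F₁.Nonempty ∧ F₂.Nonempty ∧ F₂.Finite ∧
          (∀ f ∈ F₁, ∀ x, |f x| ≤ M₁) ∧ (∀ f ∈ F₂, ∀ x, |f x| ≤ M₂) ∧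
          c * (1 + Real.logb 2 (F₂.ncard)) * (M₁ * M₂ / ε) ^ 2 *
              (Real.logb 2 (M₁ * M₂ / ε))⁻¹ ≤
            elog2 (covN μ F₂ F₁ ε) := by
  classical
  refine ⟨(2 : ℝ) ^ (-40 : ℤ), by positivity, ?_⟩
  intro M₁ M₂ ε hM₁ hM₂ hε
  obtain ⟨hε0, hεlt⟩ := hε
  have hMM : 0 < M₁ * M₂ := mul_pos hM₁ hM₂
  set t : ℝ := M₁ * M₂ / ε with ht
  have ht2 : 2 < t := by
    rw [ht, lt_div_iff₀ hε0]; linarith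
  have ht0 : 0 < t := by linarith
  set u : ℕ := max 1 ⌊t ^ 2 / 256⌋₊ with hu
  have hu1 : 1 ≤ u := le_max_left _ _
  set m : ℕ := Nat.log 2 u with hm
  set N : ℕ := 2 ^ m with hNdef
  have hN1 : 1 ≤ N := Nat.one_le_two_pow
  set d : ℕ := N / 1024 with hd
  have hNu : N ≤ u := by rw [hNdef, hm]; exact Nat.pow_log_le_self 2 (by omega)
  have huN : u < 2 * N := by
    have h := Nat.lt_pow_succ_log_self (by norm_num : 1 < 2) u
    rw [pow_succ, ← hm, ← hNdef] at h
    omega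
  have ht_upper : t ^ 2 < 512 * (N : ℝ) := by
    have h1 : t ^ 2 / 256 < (⌊t ^ 2 / 256⌋₊ : ℝ) + 1 := Nat.lt_floor_add_one _
    have h3 : (u : ℝ) + 1 ≤ 2 * N := by exact_mod_cast huN
    have h4 : ((⌊t ^ 2 / 256⌋₊ : ℕ) : ℝ) ≤ (u : ℝ) := Nat.cast_le.mpr (le_max_right 1 _)
    nlinarith
  have hsplit : (N : ℝ) * 256 ≤ t ^ 2 ∨ (m = 0 ∧ t ^ 2 < 256) := by
    by_cases h16 : (256 : ℝ) ≤ t ^ 2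
    · left
      have hfl1 : 1 ≤ ⌊t ^ 2 / 256⌋₊ := by
        apply Nat.le_floor
        rw [Nat.cast_one, le_div_iff₀ (by norm_num : (0:ℝ) < 256)]
        linarith
      have huf : u = ⌊t ^ 2 / 256⌋₊ := max_eq_right hfl1
      have hNr : (N : ℝ) ≤ t ^ 2 / 256 := by
        calc (N : ℝ) ≤ (u : ℝ) := Nat.cast_le.mpr hNu
          _ ≤ t ^ 2 / 256 := by rw [huf]; exact Nat.floor_le (by positivity)
      linarith
    · right
      push_neg at h16
      have hfl0 : ⌊t ^ 2 / 256⌋₊ = 0 := by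
        rw [Nat.floor_eq_zero, div_lt_one (by norm_num : (0:ℝ) < 256)]
        linarith
      have hu01 : u = 1 := by rw [hu, hfl0]; simp
      exact ⟨by rw [hm, hu01, Nat.log_one_right], h16⟩
  refine ⟨(Fin m → Bool), inferInstance, inferInstance, unif m, F1 M₁ m, F2 M₂ m,
    Set.range_nonempty _, Set.range_nonempty _, Set.finite_range _, ?_, ?_, ?_⟩
  · rintro f ⟨σ, rfl⟩ x
    simp only [Efun]
    split
    · rw [abs_of_pos hM₁]
    · rw [abs_neg, abs_of_pos hM₁]
  · rintro f ⟨a, rfl⟩ x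
    dsimp only
    rw [abs_mul, chi_abs, mul_one, abs_of_pos hM₂]
  -- the main inequality
  have hM2sq : (0:ℝ) < M₁ ^ 2 * M₂ ^ 2 := by positivity
  have hNcast : ((2 : ℝ) ^ m) = (N : ℝ) := by rw [hNdef]; push_cast; ring
  have hNrpos : (0:ℝ) < (N : ℝ) := by exact_mod_cast (by omega : 0 < N)
  have hN4t : ∀ σ τ : (Fin m → Bool) → Bool,
      OI.dnorm (unif m) (F2 M₂ m) (Efun M₁ σ - Efun M₁ τ) ≤ ε →
      (Finset.univ.filter fun x => σ x ≠ τ x).card ≤ d := by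
    intro σ τ hle
    have hb := hamming_bound hM₁ hM₂ σ τ hle
    rw [hNcast] at hb
    set h : ℕ := (Finset.univ.filter fun x => σ x ≠ τ x).card with hh
    have hεt : ε = M₁ * M₂ / t := by rw [ht]; field_simp
    have hhr : (h : ℝ) * (4 * t ^ 2) ≤ (N : ℝ) ^ 2 := by
      rw [hεt] at hb
      have hb2 : 4 * M₁ ^ 2 * M₂ ^ 2 * (h : ℝ) * t ^ 2
          ≤ (M₁ * M₂ / t) ^ 2 * (N : ℝ) ^ 2 * t ^ 2 :=
        mul_le_mul_of_nonneg_right hb (by positivity)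
      have he : (M₁ * M₂ / t) ^ 2 * (N : ℝ) ^ 2 * t ^ 2
          = M₁ ^ 2 * M₂ ^ 2 * (N : ℝ) ^ 2 := by
        field_simp
      rw [he] at hb2
      have hb3 : (M₁ ^ 2 * M₂ ^ 2) * ((h : ℝ) * (4 * t ^ 2))
          ≤ (M₁ ^ 2 * M₂ ^ 2) * (N : ℝ) ^ 2 := by nlinarith [hb2]
      exact le_of_mul_le_mul_left hb3 hM2sq
    rcases hsplit with hcase | ⟨hm0, hcase⟩
    · have h4h : (0:ℝ) ≤ 4 * (h : ℝ) := mul_nonneg (by norm_num) (Nat.cast_nonneg _)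
      have step1 : 4 * (h : ℝ) * ((N : ℝ) * 256) ≤ 4 * (h : ℝ) * t ^ 2 :=
        mul_le_mul_of_nonneg_left hcase h4h
      have step2 : ((h : ℝ) * 1024) * (N : ℝ) ≤ (N : ℝ) * (N : ℝ) := by nlinarith [hhr]
      have step3 : (h : ℝ) * 1024 ≤ (N : ℝ) := le_of_mul_le_mul_right
        (by nlinarith [step2]) hNrpos
      have h1024 : h * 1024 ≤ N := by exact_mod_cast step3
      omega
    · have hNone : N = 1 := by rw [hNdef, hm0, pow_zero]
      have hsm : (h : ℝ) * (4 * t ^ 2) ≤ 1 := by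
        rw [hNone] at hhr; simpa using hhr
      have hh0 : h = 0 := by
        by_contra hne
        have h1le : (1:ℝ) ≤ (h : ℝ) := by exact_mod_cast Nat.one_le_iff_ne_zero.mpr hne
        nlinarith
      simp [hh0]
  set b : ℕ := ∑ i ∈ Finset.range (d + 1), N.choose i with hbdef
  have hbB : (b : ℝ) ≤ 2 ^ (N / 4) := by
    rcases Nat.eq_zero_or_pos d with hd0 | hdpos
    · rw [hbdef, hd0]
      simp only [zero_add, Finset.range_one, Finset.sum_singleton, Nat.choose_zero_right,
        Nat.cast_one]
      exact one_le_pow₀ (by norm_num)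
    · have h1 := sum_choose_le N d (by omega : d ≤ N)
      have h2 := ratio_pow_le N
      have hexp : 10 * d + (N / 512 + 1) ≤ N / 4 := by omega
      calc (b : ℝ) ≤ 1024 ^ d * (1024 / 1023) ^ N := by exact_mod_cast h1
        _ ≤ 1024 ^ d * 2 ^ (N / 512 + 1) :=
            mul_le_mul_of_nonneg_left h2 (by positivity)
        _ = 2 ^ (10 * d) * 2 ^ (N / 512 + 1) := by
            rw [pow_mul]; norm_num
        _ = 2 ^ (10 * d + (N / 512 + 1)) := (pow_add 2 _ _).symm
        _ ≤ 2 ^ (N / 4) := pow_le_pow_right₀ one_le_two hexp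
  have hcovlarge : ∀ C : Set ((Fin m → Bool) → ℝ),
      OI.IsCover (unif m) (F2 M₂ m) (F1 M₁ m) ε C →
      ((2 ^ (N - N / 4) : ℕ) : ℕ∞) ≤ C.encard := by
    intro C hC
    by_cases hCfin : C.Finite
    · have hchoose : ∀ σ : (Fin m → Bool) → Bool, ∃ c ∈ C,
          OI.dnorm (unif m) (F2 M₂ m) (Efun M₁ σ - c) ≤ ε :=
        fun σ => hC.2 _ ⟨σ, rfl⟩
      choose Φ hΦC hΦε using hchoose
      have hfiber : ∀ c ∈ Finset.univ.image Φ,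
          (Finset.univ.filter fun σ => Φ σ = c).card ≤ b := by
        intro c hc
        obtain ⟨σ0, -, rfl⟩ := Finset.mem_image.mp hc
        obtain ⟨τ, hτ⟩ := hC.1 (hΦC σ0)
        calc (Finset.univ.filter fun σ => Φ σ = Φ σ0).card
            ≤ (Finset.univ.filter fun σ : (Fin m → Bool) → Bool =>
                (Finset.univ.filter fun x => σ x ≠ τ x).card ≤ d).card := by
              apply Finset.card_le_card
              intro σ hσ
              simp only [Finset.mem_filter, Finset.mem_univ, true_and] at hσ ⊢
              apply hN4t σ τ
              have he : Efun M₁ τ = Φ σ := hτ.trans hσ.symm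
              rw [he]
              exact hΦε σ
          _ ≤ ∑ i ∈ Finset.range (d + 1), (Fintype.card (Fin m → Bool)).choose i :=
              card_ball τ d
          _ = b := by rw [hbdef, card_V, ← hNdef]
      have hcount := Finset.card_le_mul_card_image (f := Φ) Finset.univ b hfiber
      have hcards : Fintype.card ((Fin m → Bool) → Bool) = 2 ^ N := by
        rw [Fintype.card_fun, Fintype.card_bool, card_V, ← hNdef]
      rw [Finset.card_univ, hcards] at hcount
      have himgC : (Finset.univ.image Φ).card ≤ hCfin.toFinset.card := by
        apply Finset.card_le_card
        intro c hc
        obtain ⟨σ0, -, rfl⟩ := Finset.mem_image.mp hc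
        exact hCfin.mem_toFinset.mpr (hΦC σ0)
      have hc1 : ((2 ^ N : ℕ) : ℝ) ≤ (b : ℝ) * (hCfin.toFinset.card : ℝ) := by
        have hq : (2 ^ N : ℕ) ≤ b * hCfin.toFinset.card :=
          le_trans hcount (Nat.mul_le_mul_left b himgC)
        exact_mod_cast hq
      have hcard0 : (0:ℝ) ≤ (hCfin.toFinset.card : ℝ) := Nat.cast_nonneg _
      have hc2 : ((2:ℝ)) ^ N ≤ 2 ^ (N / 4) * (hCfin.toFinset.card : ℝ) := by
        calc ((2:ℝ)) ^ N = ((2 ^ N : ℕ) : ℝ) := by push_cast; ring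
          _ ≤ (b : ℝ) * (hCfin.toFinset.card : ℝ) := hc1
          _ ≤ 2 ^ (N / 4) * (hCfin.toFinset.card : ℝ) :=
              mul_le_mul_of_nonneg_right hbB hcard0
      have hsplitpow : (2:ℝ) ^ N = 2 ^ (N - N / 4) * 2 ^ (N / 4) := by
        rw [← pow_add]; congr 1; omega
      have hreal : ((2 : ℝ)) ^ (N - N / 4) ≤ (hCfin.toFinset.card : ℝ) := by
        have h2pos : (0:ℝ) < 2 ^ (N / 4) := by positivity
        apply le_of_mul_le_mul_right _ h2pos
        calc (2:ℝ) ^ (N - N / 4) * 2 ^ (N / 4) = 2 ^ N := hsplitpow.symm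
          _ ≤ 2 ^ (N / 4) * (hCfin.toFinset.card : ℝ) := hc2
          _ = (hCfin.toFinset.card : ℝ) * 2 ^ (N / 4) := mul_comm _ _
      have hnat : 2 ^ (N - N / 4) ≤ hCfin.toFinset.card := by exact_mod_cast hreal
      rw [hCfin.encard_eq_coe_toFinset_card]
      exact_mod_cast hnat
    · rw [Set.Infinite.encard_eq hCfin]
      exact le_top
  have hself : OI.IsCover (unif m) (F2 M₂ m) (F1 M₁ m) ε (F1 M₁ m) := by
    refine ⟨subset_rfl, fun g hg => ⟨g, hg, ?_⟩⟩
    rw [sub_self]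
    have h0 : OI.dnorm (unif m) (F2 M₂ m) 0 = 0 :=
      dnorm_zero _ _ ⟨_, Set.mem_range_self (fun _ => false)⟩
    rw [h0]
    exact hε0.le
  have hcovfin : OI.covN (unif m) (F2 M₂ m) (F1 M₁ m) ε ≠ ⊤ := by
    have hle : OI.covN (unif m) (F2 M₂ m) (F1 M₁ m) ε ≤ (F1 M₁ m).encard := by
      rw [OI.covN]
      exact iInf₂_le _ hself
    exact (lt_of_le_of_lt hle (Set.finite_range _).encard_lt_top).ne
  have hlow : ((2 ^ (N - N / 4) : ℕ) : ℕ∞) ≤ OI.covN (unif m) (F2 M₂ m) (F1 M₁ m) ε := by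
    rw [OI.covN]
    exact le_iInf fun C => le_iInf fun hC => hcovlarge C hC
  have htoNat : 2 ^ (N - N / 4) ≤ (OI.covN (unif m) (F2 M₂ m) (F1 M₁ m) ε).toNat := by
    have hq := ENat.toNat_le_toNat hlow hcovfin
    rw [ENat.toNat_coe] at hq; exact hq
  have helog : ((N : ℝ) - ((N / 4 : ℕ) : ℝ))
      ≤ OI.elog2 (OI.covN (unif m) (F2 M₂ m) (F1 M₁ m) ε) := by
    rw [OI.elog2]
    have h1 : Real.logb 2 ((2 : ℝ) ^ (N - N / 4)) ≤
        Real.logb 2 (((OI.covN (unif m) (F2 M₂ m) (F1 M₁ m) ε).toNat : ℝ)) := by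
      apply Real.logb_le_logb_of_le one_lt_two (by positivity)
      exact_mod_cast htoNat
    rw [Real.logb_pow, Real.logb_self_eq_one one_lt_two, mul_one] at h1
    calc (N : ℝ) - ((N / 4 : ℕ) : ℝ) = ((N - N / 4 : ℕ) : ℝ) := by
          rw [Nat.cast_sub (Nat.div_le_self _ _)]
      _ ≤ _ := h1
  have hinj : Function.Injective (fun a : Fin m → Bool => fun x => M₂ * chi a x) := by
    intro a a' haa
    by_contra hne
    obtain ⟨i, hi⟩ := Function.ne_iff.mp hne
    have h1 := congrFun haa (fun j => decide (j = i))
    dsimp only at h1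
    rw [chi_delta, chi_delta] at h1
    cases h2 : a i <;> cases h3 : a' i <;>
      rw [h2, h3] at h1 hi <;> simp at h1 hi <;> linarith
  have hF2card : (F2 M₂ m).ncard = N := by
    rw [F2, ← Set.image_univ, Set.ncard_image_of_injective _ hinj, Set.ncard_univ,
      Nat.card_eq_fintype_card, card_V, ← hNdef]
  have hlog22 : Real.logb 2 2 = 1 := Real.logb_self_eq_one one_lt_two
  have hlogt1 : 1 ≤ Real.logb 2 t := by
    rw [← hlog22]
    exact Real.logb_le_logb_of_le one_lt_two (by norm_num) ht2.le
  have hlogtpos : 0 < Real.logb 2 t := lt_of_lt_of_le one_pos hlogt1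
  rw [hF2card]
  have hlogN : Real.logb 2 ((N : ℕ) : ℝ) = (m : ℝ) := by
    rw [hNdef]
    push_cast
    rw [Real.logb_pow, Real.logb_self_eq_one one_lt_two, mul_one]
  rw [hlogN]
  have hR : (3 / 4 : ℝ) * (N : ℝ) ≤ (N : ℝ) - ((N / 4 : ℕ) : ℝ) := by
    have hq : ((N / 4 : ℕ) : ℝ) ≤ (N : ℝ) / 4 := Nat.cast_div_le
    linarith
  rcases hsplit with hcase | ⟨hm0, hcase⟩
  · have hm2L : (1:ℝ) + (m : ℝ) ≤ 2 * Real.logb 2 t := by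
      have hNle : (2:ℝ) ^ m ≤ t ^ 2 / 256 := by
        rw [hNcast]; linarith
      have h1 : (m : ℝ) ≤ Real.logb 2 (t ^ 2 / 256) := by
        calc (m : ℝ) = Real.logb 2 ((2:ℝ) ^ m) := by
              rw [Real.logb_pow, Real.logb_self_eq_one one_lt_two, mul_one]
          _ ≤ _ := Real.logb_le_logb_of_le one_lt_two (by positivity) hNle
      have h2 : Real.logb 2 (t ^ 2 / 256) = 2 * Real.logb 2 t - 8 := by
        rw [Real.logb_div (by positivity) (by norm_num),
          show (256:ℝ) = 2 ^ 8 by norm_num, Real.logb_pow, Real.logb_pow,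
          Real.logb_self_eq_one one_lt_two]
        ring
      rw [h2] at h1
      linarith
    have hLHS : (2:ℝ) ^ (-40 : ℤ) * (1 + (m : ℝ)) * t ^ 2 * (Real.logb 2 t)⁻¹
        ≤ (3 / 4 : ℝ) * (N : ℝ) := by
      have step : (2:ℝ) ^ (-40 : ℤ) * (1 + (m : ℝ)) * t ^ 2 * (Real.logb 2 t)⁻¹
          ≤ (2:ℝ) ^ (-40 : ℤ) * (2 * Real.logb 2 t) * t ^ 2 * (Real.logb 2 t)⁻¹ := by
        gcongr
      have e1 : (2:ℝ) ^ (-40 : ℤ) * (2 * Real.logb 2 t) * t ^ 2 * (Real.logb 2 t)⁻¹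
          = (2:ℝ) ^ (-40 : ℤ) * 2 * t ^ 2 := by
        field_simp
      rw [e1] at step
      have hc2 : (0:ℝ) ≤ (2:ℝ) ^ (-40 : ℤ) * 2 := by positivity
      have step2 : (2:ℝ) ^ (-40 : ℤ) * 2 * t ^ 2
          ≤ (2:ℝ) ^ (-40 : ℤ) * 2 * (512 * (N : ℝ)) :=
        mul_le_mul_of_nonneg_left ht_upper.le hc2
      have step3 : (2:ℝ) ^ (-40 : ℤ) * 2 * (512 * (N : ℝ)) ≤ (3 / 4 : ℝ) * (N : ℝ) := by
        have hv : (2:ℝ) ^ (-40 : ℤ) * 2 * 512 ≤ 3 / 4 := by norm_num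
        nlinarith [hNrpos.le]
      linarith
    linarith [helog, hR, hLHS]
  · have hNone : N = 1 := by rw [hNdef, hm0, pow_zero]
    have hRHS : (1:ℝ) ≤ (N : ℝ) - ((N / 4 : ℕ) : ℝ) := by
      rw [hNone]
      norm_num
    have hinv1 : (Real.logb 2 t)⁻¹ ≤ 1 := inv_le_one_of_one_le₀ hlogt1
    have hmcast : (m : ℝ) = 0 := by rw [hm0]; norm_num
    have hLHS : (2:ℝ) ^ (-40 : ℤ) * (1 + (m : ℝ)) * t ^ 2 * (Real.logb 2 t)⁻¹ ≤ 1 := by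
      rw [hmcast]
      calc (2:ℝ) ^ (-40 : ℤ) * (1 + 0) * t ^ 2 * (Real.logb 2 t)⁻¹
          ≤ (2:ℝ) ^ (-40 : ℤ) * (1 + 0) * 256 * 1 := by
            gcongr

        _ ≤ 1 := by norm_num
    linarith [helog, hRHS, hLHS]
end
end

section
/- Let μ be a probability distribution over X, let ε > 0, let p, p* : X → [0,1] be predictors, and let d : X → [−1,1]. If ⟨p* − p, d⟩_μ ≥ ε/5, then the updated predictor p' defined by p'(x) = max{0, min{1, p(x) + (ε/5)·d(x)}} satisfies ‖p' − p*‖₂² ≤ ‖p − p*‖₂² − ε²/25, where ‖f‖₂² denotes ⟨f, f⟩_μ. -/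
open scoped ENNReal Pointwise

noncomputable section

open OI

lemma summable_mu {X : Type*} (μ : PMF X) : Summable (fun a => (μ a).toReal) := by
  apply ENNReal.summable_toReal
  simp [μ.tsum_coe]

lemma summable_bdd {X : Type*} (μ : PMF X) (f : X → ℝ) (C : ℝ) (h : ∀ x, |f x| ≤ C) :
    Summable (fun a => (μ a).toReal * f a) := by
  have habs : Summable (fun a => |(μ a).toReal * f a|) := by
    refine Summable.of_nonneg_of_le (fun a => abs_nonneg _) (fun a => ?_)
      ((summable_mu μ).mul_left C)
    rw [abs_mul, abs_of_nonneg ENNReal.toReal_nonneg, mul_comm]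
    exact mul_le_mul_of_nonneg_right (h a) ENNReal.toReal_nonneg
  exact habs.of_abs

lemma pexp_mono {X : Type*} (μ : PMF X) (f g : X → ℝ)
    (hf : Summable (fun a => (μ a).toReal * f a)) (hg : Summable (fun a => (μ a).toReal * g a))
    (h : ∀ x, f x ≤ g x) : pexp μ f ≤ pexp μ g := by
  exact Summable.tsum_le_tsum (fun a => mul_le_mul_of_nonneg_left (h a) ENNReal.toReal_nonneg) hf hg

lemma pexp_add {X : Type*} (μ : PMF X) (f g : X → ℝ)
    (hf : Summable (fun a => (μ a).toReal * f a)) (hg : Summable (fun a => (μ a).toReal * g a)) :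
    pexp μ (fun x => f x + g x) = pexp μ f + pexp μ g := by
  unfold pexp
  simp_rw [mul_add]
  exact Summable.tsum_add hf hg

lemma pexp_one {X : Type*} (μ : PMF X) : pexp μ (fun _ => (1 : ℝ)) = 1 := by
  unfold pexp
  simp_rw [mul_one]
  have h1 := μ.tsum_coe
  have := ENNReal.tsum_toReal_eq (f := fun a => μ a) (fun a => μ.apply_ne_top a)
  rw [← this, h1, ENNReal.toReal_one]

/-- one step of Multiaccuracy Boost: if `⟨p* − p, d⟩_μ ≥ ε/5`, then updating
`p` to `x ↦ clamp_{[0,1]}(p(x) + (ε/5)d(x))` decreases `‖p − p*‖₂² = ⟨p − p*, p − p*⟩_μ` by at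
least `ε²/25`. -/
theorem statement_11 {X : Type} [Nonempty X] (μ : PMF X) (ε : ℝ) (hε : 0 < ε)
    (p pstar d : X → ℝ) (hp : Predictor p) (hpstar : Predictor pstar) (hd : Dist1 d)
    (h : ε / 5 ≤ inn μ (pstar - p) d) :
    inn μ ((fun x => max 0 (min 1 (p x + ε / 5 * d x))) - pstar)
        ((fun x => max 0 (min 1 (p x + ε / 5 * d x))) - pstar) ≤
      inn μ (p - pstar) (p - pstar) - ε ^ 2 / 25 := by
  set η : ℝ := ε / 5 with hη
  have hη0 : 0 < η := by positivity
  set p' : X → ℝ := fun x => max 0 (min 1 (p x + η * d x)) with hp'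
  -- pointwise key inequality
  have key : ∀ x, (p' x - pstar x) * (p' x - pstar x) + 2 * η * ((pstar x - p x) * d x) ≤
      (p x - pstar x) * (p x - pstar x) + η ^ 2 := by
    intro x
    obtain ⟨hs0, hs1⟩ := hpstar x
    obtain ⟨hd1, hd2⟩ := hd x
    have hcl : (p' x - pstar x) ^ 2 ≤ (p x + η * d x - pstar x) ^ 2 := by
      simp only [hp']
      rcases le_total (p x + η * d x) 0 with h0 | h0
      · rw [min_eq_right (by linarith), max_eq_left h0]
        nlinarith
      · rcases le_total 1 (p x + η * d x) with h1 | h1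
        · rw [min_eq_left h1, max_eq_right zero_le_one]
          nlinarith
        · rw [min_eq_right h1, max_eq_right h0]
    have hdsq : (d x) ^ 2 ≤ 1 := by nlinarith
    nlinarith [hcl]
  -- summability facts
  have hb1 : ∀ x, |(p' x - pstar x) * (p' x - pstar x)| ≤ 1 := by
    intro x
    obtain ⟨hs0, hs1⟩ := hpstar x
    have h0 : (0:ℝ) ≤ p' x := le_max_left _ _
    have h1 : p' x ≤ 1 := by
      simp only [hp']
      exact max_le (by linarith) (min_le_left _ _)
    rw [abs_mul]
    have : |p' x - pstar x| ≤ 1 := by rw [abs_le]; constructor <;> linarith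
    nlinarith [abs_nonneg (p' x - pstar x)]
  have hb2 : ∀ x, |(pstar x - p x) * d x| ≤ 1 := by
    intro x
    obtain ⟨hs0, hs1⟩ := hpstar x
    obtain ⟨hq0, hq1⟩ := hp x
    obtain ⟨hd1, hd2⟩ := hd x
    rw [abs_mul]
    have h1 : |pstar x - p x| ≤ 1 := by rw [abs_le]; constructor <;> linarith
    have h2 : |d x| ≤ 1 := by rw [abs_le]; exact ⟨hd1, hd2⟩
    nlinarith [abs_nonneg (pstar x - p x), abs_nonneg (d x)]
  have hb3 : ∀ x, |(p x - pstar x) * (p x - pstar x)| ≤ 1 := by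
    intro x
    obtain ⟨hs0, hs1⟩ := hpstar x
    obtain ⟨hq0, hq1⟩ := hp x
    rw [abs_mul]
    have : |p x - pstar x| ≤ 1 := by rw [abs_le]; constructor <;> linarith
    nlinarith [abs_nonneg (p x - pstar x)]
  have s1 := summable_bdd μ _ 1 hb1
  have hb2' : ∀ x, |2 * η * ((pstar x - p x) * d x)| ≤ 2 * η * 1 := by
    intro x
    rw [abs_mul, abs_of_nonneg (by positivity : (0:ℝ) ≤ 2 * η)]
    exact mul_le_mul_of_nonneg_left (hb2 x) (by positivity)
  have s2 := summable_bdd μ (fun x => 2 * η * ((pstar x - p x) * d x)) (2 * η * 1) hb2'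
  have s3 := summable_bdd μ _ 1 hb3
  have s4 := summable_bdd μ (fun _ : X => η ^ 2) (η ^ 2) (fun x => by simp [abs_of_nonneg (sq_nonneg η)])
  -- expectation inequality
  have hmain : pexp μ (fun x => (p' x - pstar x) * (p' x - pstar x) +
        2 * η * ((pstar x - p x) * d x)) ≤
      pexp μ (fun x => (p x - pstar x) * (p x - pstar x) + η ^ 2) := by
    refine pexp_mono μ _ _ ?_ ?_ key
    · simp_rw [mul_add]; exact s1.add s2
    · simp_rw [mul_add]; exact s3.add s4
  rw [pexp_add μ _ _ s1 s2, pexp_add μ _ _ s3 s4] at hmain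
  -- identify the pieces
  have e1 : pexp μ (fun x => (p' x - pstar x) * (p' x - pstar x)) =
      inn μ ((fun x => max 0 (min 1 (p x + ε / 5 * d x))) - pstar)
        ((fun x => max 0 (min 1 (p x + ε / 5 * d x))) - pstar) := by
    unfold inn; rfl
  have e2 : pexp μ (fun x => 2 * η * ((pstar x - p x) * d x)) =
      2 * η * inn μ (pstar - p) d := by
    unfold inn pexp
    rw [← tsum_mul_left]
    congr 1; funext a; simp [Pi.sub_apply]; ring
  have e3 : pexp μ (fun x => (p x - pstar x) * (p x - pstar x)) =
      inn μ (p - pstar) (p - pstar) := by unfold inn; rfl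
  have e4 : pexp μ (fun _ : X => η ^ 2) = η ^ 2 := by
    have h1 : (∑' a : X, (μ a).toReal) = 1 := by
      have := pexp_one μ
      unfold pexp at this
      simpa using this
    unfold pexp
    simp only []
    rw [tsum_mul_right, h1, one_mul]
  rw [e1, e2, e3, e4] at hmain
  have hbound : 2 * η * η ≤ 2 * η * inn μ (pstar - p) d :=
    mul_le_mul_of_nonneg_left h (by positivity)
  have : η ^ 2 = ε ^ 2 / 25 := by rw [hη]; ring
  nlinarith [hmain, hbound]
end
end

section
/- For all ε, δ ∈ (0,1), there exists a positive integer n = O( ε^{−2} log(2/δ) ) such that for every positive integer m, with X = {⊥} ∪ {0,1}^m and P = {p₁, p₂} where p₁(⊥) = 0, p₂(⊥) = 1, and p₁(x) = p₂(x) = 1/2 for all x ∈ {0,1}^m, there exists an n-sample learner such that for every distribution μ over X and every target predictor p* ∈ [0,1]^X, given n i.i.d. examples from μ_{p*}, the learner outputs a predictor p with ‖p − p*‖_{μ,[−1,1]^X} ≤ inf_{p'∈P} ‖p' − p*‖_{μ,[−1,1]^X} + ε with probability at least 1 − δ. -/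
open scoped ENNReal Pointwise

noncomputable section

open OI

/-- The domain `X = {⊥} ∪ {0,1}^m`, with `none` playing the role of `⊥`. -/
abbrev Cube (m : ℕ) := Option (Fin m → Bool)

/-- The predictor `p₁` with `p₁(⊥) = 0` and `p₁(x) = 1/2` on the cube. -/
def pLow (m : ℕ) : Cube m → ℝ := fun x => x.elim 0 fun _ => 1 / 2

/-- The predictor `p₂` with `p₂(⊥) = 1` and `p₂(x) = 1/2` on the cube. -/
def pHigh (m : ℕ) : Cube m → ℝ := fun x => x.elim 1 fun _ => 1 / 2

namespace Stmt16

open scoped ENNReal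
open OI

variable {α β X : Type*}

/-- Expectation in `ℝ≥0∞` of a nonnegative function under a PMF. -/
noncomputable def ee (q : PMF α) (f : α → ℝ≥0∞) : ℝ≥0∞ := ∑' a, q a * f a

lemma ee_bind (q : PMF α) (k : α → PMF β) (f : β → ℝ≥0∞) :
    ee (q.bind k) f = ee q (fun a => ee (k a) f) := by
  simp only [ee, PMF.bind_apply]
  calc ∑' b, (∑' a, q a * k a b) * f b
      = ∑' b, ∑' a, q a * (k a b * f b) := by
        refine tsum_congr fun b => ?_
        rw [← ENNReal.tsum_mul_right]
        exact tsum_congr fun a => mul_assoc _ _ _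
    _ = ∑' a, ∑' b, q a * (k a b * f b) := ENNReal.tsum_comm
    _ = ∑' a, q a * ∑' b, k a b * f b := by
        exact tsum_congr fun a => (ENNReal.tsum_mul_left)

lemma ee_pure (a : α) (f : α → ℝ≥0∞) : ee (PMF.pure a) f = f a := by
  simp only [ee, PMF.pure_apply]
  rw [tsum_eq_single a]
  · simp
  · intro b hb; simp [hb]

lemma ee_map (q : PMF α) (g : α → β) (f : β → ℝ≥0∞) :
    ee (q.map g) f = ee q (fun a => f (g a)) := by
  show ee (q.bind fun a => PMF.pure (g a)) f = _
  rw [ee_bind]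
  refine tsum_congr fun a => ?_
  simp only [ee_pure]

lemma ee_const_mul (q : PMF α) (c : ℝ≥0∞) (f : α → ℝ≥0∞) :
    ee q (fun a => c * f a) = c * ee q f := by
  simp only [ee]
  rw [← ENNReal.tsum_mul_left]
  exact tsum_congr fun a => by ring

lemma ee_iid (q : PMF α) (f : α → ℝ≥0∞) (n : ℕ) :
    ee (iid q n) (fun v => ∏ i, f (v i)) = (ee q f) ^ n := by
  induction n with
  | zero => simp [iid, ee_pure]
  | succ n ih =>
      rw [iid, ee_bind]
      have : (fun v : Fin n → α => ee (q.map fun a => Fin.cons a v) fun w => ∏ i, f (w i))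
          = fun v : Fin n → α => (ee q f) * ∏ i, f (v i) := by
        funext v
        rw [ee_map]
        have h1 : (fun a => ∏ i, f (Fin.cons a v i)) = fun a => f a * ∏ i, f (v i) := by
          funext a; simp [Fin.prod_univ_succ]
        rw [h1]
        show ∑' a, q a * (f a * ∏ i, f (v i)) = _
        calc ∑' a, q a * (f a * ∏ i, f (v i))
            = ∑' a, (q a * f a) * ∏ i, f (v i) := tsum_congr fun a => (mul_assoc _ _ _).symm
          _ = (∑' a, q a * f a) * ∏ i, f (v i) := ENNReal.tsum_mul_right
          _ = ee q f * ∏ i, f (v i) := rfl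
      rw [this, ee_const_mul, ih, pow_succ, mul_comm]

lemma prob_le_ee (q : PMF α) (E : Set α) (f : α → ℝ≥0∞) (h : ∀ a ∈ E, 1 ≤ f a) :
    prob q E ≤ ee q f := by
  rw [prob, PMF.toOuterMeasure_apply]
  refine ENNReal.tsum_le_tsum fun a => ?_
  by_cases ha : a ∈ E
  · rw [Set.indicator_of_mem ha]
    calc q a = q a * 1 := (mul_one _).symm
      _ ≤ q a * f a := mul_le_mul_right (h a ha) _
  · rw [Set.indicator_of_notMem ha]; exact zero_le


lemma summable_mul (q : PMF α) {f : α → ℝ} {B : ℝ} (hf : ∀ a, |f a| ≤ B) :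
    Summable fun a => (q a).toReal * f a := by
  have hq : Summable fun a => (q a).toReal :=
    ENNReal.summable_toReal (by rw [q.tsum_coe]; exact ENNReal.one_ne_top)
  refine Summable.of_norm ?_
  refine Summable.of_nonneg_of_le (fun a => norm_nonneg _) (fun a => ?_) (hq.mul_right B)
  rw [norm_mul, Real.norm_eq_abs, Real.norm_eq_abs, abs_of_nonneg ENNReal.toReal_nonneg]
  exact mul_le_mul_of_nonneg_left (hf a) ENNReal.toReal_nonneg

lemma tsum_toReal_one (q : PMF α) : ∑' a, (q a).toReal = 1 := by
  have := (ENNReal.tsum_toReal_eq (fun a => q.apply_ne_top a)).symm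
  rw [q.tsum_coe] at this
  simpa using this

lemma pexp_const (q : PMF α) (c : ℝ) : pexp q (fun _ => c) = c := by
  simp only [pexp]
  rw [tsum_mul_right, tsum_toReal_one, one_mul]

lemma ee_ofReal (q : PMF α) {f : α → ℝ} {B : ℝ} (h0 : ∀ a, 0 ≤ f a) (hB : ∀ a, f a ≤ B) :
    ee q (fun a => ENNReal.ofReal (f a)) = ENNReal.ofReal (pexp q f) := by
  have hs : Summable fun a => (q a).toReal * f a :=
    summable_mul q (fun a => by rw [abs_of_nonneg (h0 a)]; exact hB a)
  rw [pexp, ENNReal.ofReal_tsum_of_nonneg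
    (fun a => mul_nonneg ENNReal.toReal_nonneg (h0 a)) hs]
  exact tsum_congr fun a => by
    rw [ENNReal.ofReal_mul ENNReal.toReal_nonneg, ENNReal.ofReal_toReal (q.apply_ne_top a)]

lemma pexp_mono (q : PMF α) {f g : α → ℝ} {B C : ℝ} (hf : ∀ a, |f a| ≤ B)
    (hg : ∀ a, |g a| ≤ C) (h : ∀ a, f a ≤ g a) : pexp q f ≤ pexp q g :=
  Summable.tsum_le_tsum (fun a => mul_le_mul_of_nonneg_left (h a) ENNReal.toReal_nonneg)
    (summable_mul q hf) (summable_mul q hg)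

lemma pexp_linear (q : PMF α) {Z : α → ℝ} (hZ : ∀ a, |Z a| ≤ 1) (c l : ℝ) :
    pexp q (fun a => c - l * Z a) = c - l * pexp q Z := by
  have hsZ : Summable fun a => (q a).toReal * Z a := summable_mul q hZ
  have hsc : Summable fun a => (q a).toReal * c :=
    summable_mul q (B := |c|) (fun a => le_refl _)
  simp only [pexp]
  calc ∑' a, (q a).toReal * (c - l * Z a)
      = ∑' a, ((q a).toReal * c - l * ((q a).toReal * Z a)) := tsum_congr fun a => by ring
    _ = (∑' a, (q a).toReal * c) - ∑' a, l * ((q a).toReal * Z a) :=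
        Summable.tsum_sub hsc (hsZ.mul_left l)
    _ = c - l * ∑' a, (q a).toReal * Z a := by
        rw [tsum_mul_left]
        congr 1
        have := pexp_const q c
        simpa [pexp] using this

lemma pexp_neg (q : PMF α) (Z : α → ℝ) : pexp q (fun a => -Z a) = -pexp q Z := by
  simp only [pexp]
  rw [← tsum_neg]
  exact tsum_congr fun a => by ring


lemma exp_quad_bound {u : ℝ} (hu : |u| ≤ 1) : Real.exp u ≤ 1 + u + 3 / 4 * u ^ 2 := by
  have h := Real.exp_bound hu (n := 2) (by norm_num)
  have hsum : ∑ m ∈ Finset.range 2, u ^ m / (Nat.factorial m) = 1 + u := by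
    simp [Finset.sum_range_succ]
  rw [hsum] at h
  have h1 := (abs_sub_le_iff.1 h).1
  have h2 : |u| ^ 2 = u ^ 2 := sq_abs u
  norm_num [Nat.factorial] at h1
  nlinarith [h1, h2]

lemma chernoff (q : PMF α) {Z : α → ℝ} (hZ : ∀ a, |Z a| ≤ 1) {ε : ℝ} (hε0 : 0 < ε)
    (hε1 : ε ≤ 1) (ht : ε ≤ pexp q Z) (n : ℕ) :
    prob (iid q n) {v : Fin n → α | ∑ i, Z (v i) ≤ 0} ≤
      ENNReal.ofReal (Real.exp (-(5 / 16 * ε ^ 2) * n)) := by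
  set l : ℝ := ε / 2 with hl
  have hl0 : 0 < l := by positivity
  have hl1 : l ≤ 1 / 2 := by rw [hl]; linarith
  set g : α → ℝ := fun a => Real.exp (-(l * Z a)) with hg
  have hg0 : ∀ a, 0 ≤ g a := fun a => (Real.exp_pos _).le
  have hgB : ∀ a, g a ≤ Real.exp 1 := fun a => by
    apply Real.exp_le_exp.2
    have h := abs_le.1 (hZ a)
    nlinarith [h.1, h.2]
  -- Markov / MGF step
  have step1 : prob (iid q n) {v : Fin n → α | ∑ i, Z (v i) ≤ 0} ≤
      (ee q fun a => ENNReal.ofReal (g a)) ^ n := by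
    rw [← ee_iid]
    refine prob_le_ee _ _ _ fun v hv => ?_
    have hprod : (∏ i, ENNReal.ofReal (g (v i))) = ENNReal.ofReal (∏ i, g (v i)) :=
      (ENNReal.ofReal_prod_of_nonneg fun i _ => hg0 _).symm
    rw [hprod, ENNReal.one_le_ofReal]
    have hps : (∏ i, g (v i)) = Real.exp (∑ i, -(l * Z (v i))) := (Real.exp_sum _ _).symm
    rw [hps]
    refine Real.one_le_exp ?_
    have hsum : ∑ i, -(l * Z (v i)) = -(l * ∑ i, Z (v i)) := by
      rw [Finset.mul_sum, ← Finset.sum_neg_distrib]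
    rw [hsum]
    have hv' : (∑ i, Z (v i)) ≤ 0 := hv
    nlinarith
  -- MGF bound
  have hub : ∀ a, |1 + 3 / 4 * l ^ 2 - l * Z a| ≤ 3 := by
    intro a
    have h := abs_le.1 (hZ a)
    rw [abs_le]
    constructor <;> nlinarith [h.1, h.2, hl0.le, hl1]
  have step2 : pexp q g ≤ 1 - 5 / 16 * ε ^ 2 := by
    have hmono : pexp q g ≤ pexp q (fun a => (1 + 3 / 4 * l ^ 2) - l * Z a) := by
      refine pexp_mono q (B := Real.exp 1) (C := 3)
        (fun a => by rw [abs_of_nonneg (hg0 a)]; exact hgB a) hub (fun a => ?_)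
      have hu : |(-(l * Z a))| ≤ 1 := by
        rw [abs_neg, abs_mul, abs_of_nonneg hl0.le]
        nlinarith [hZ a, abs_nonneg (Z a)]
      have h := exp_quad_bound hu
      have hz2 : (Z a) ^ 2 ≤ 1 := by
        have h2 := abs_le.1 (hZ a)
        nlinarith [h2.1, h2.2]
      have : (-(l * Z a)) ^ 2 ≤ l ^ 2 := by nlinarith [sq_nonneg l]
      calc g a = Real.exp (-(l * Z a)) := rfl
        _ ≤ 1 + (-(l * Z a)) + 3 / 4 * (-(l * Z a)) ^ 2 := h
        _ ≤ (1 + 3 / 4 * l ^ 2) - l * Z a := by nlinarith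
    have hlin := pexp_linear q hZ (1 + 3 / 4 * l ^ 2) l
    rw [hlin] at hmono
    have hle : l * ε ≤ l * pexp q Z := mul_le_mul_of_nonneg_left ht hl0.le
    have : (1 + 3 / 4 * l ^ 2) - l * pexp q Z ≤ 1 - 5 / 16 * ε ^ 2 := by
      rw [hl] at hle ⊢
      nlinarith [hle]
    linarith
  have hnn : (0:ℝ) ≤ 1 - 5 / 16 * ε ^ 2 := by nlinarith
  calc prob (iid q n) {v : Fin n → α | ∑ i, Z (v i) ≤ 0}
      ≤ (ee q fun a => ENNReal.ofReal (g a)) ^ n := step1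
    _ = (ENNReal.ofReal (pexp q g)) ^ n := by rw [ee_ofReal q hg0 hgB]
    _ ≤ (ENNReal.ofReal (1 - 5 / 16 * ε ^ 2)) ^ n := by
        gcongr
    _ = ENNReal.ofReal ((1 - 5 / 16 * ε ^ 2) ^ n) := (ENNReal.ofReal_pow hnn n).symm
    _ ≤ ENNReal.ofReal (Real.exp (-(5 / 16 * ε ^ 2) * n)) := by
        apply ENNReal.ofReal_le_ofReal
        have h1 : 1 - 5 / 16 * ε ^ 2 ≤ Real.exp (-(5 / 16 * ε ^ 2)) := by
          have := Real.add_one_le_exp (-(5 / 16 * ε ^ 2))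
          linarith
        calc (1 - 5 / 16 * ε ^ 2) ^ n ≤ Real.exp (-(5 / 16 * ε ^ 2)) ^ n :=
              pow_le_pow_left₀ hnn h1 n
          _ = Real.exp (-(5 / 16 * ε ^ 2) * n) := by
              rw [← Real.exp_nat_mul, mul_comm]


lemma dnorm_eq_l1 (μ : PMF X) {f : X → ℝ} (hf : ∀ x, |f x| ≤ 1) :
    dnorm μ {d : X → ℝ | Dist1 d} f = pexp μ (fun x => |f x|) := by
  have habs : ∀ a, |(|f a|)| ≤ 1 := fun a => by rw [abs_abs]; exact hf a
  have hbound : ∀ g ∈ {d : X → ℝ | Dist1 d}, |inn μ f g| ≤ pexp μ (fun x => |f x|) := by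
    intro g hg
    have hg' : ∀ x, |g x| ≤ 1 := fun x => abs_le.2 ⟨(hg x).1, (hg x).2⟩
    have hfg : ∀ a, |f a * g a| ≤ 1 := fun a => by
      rw [abs_mul]
      calc |f a| * |g a| ≤ 1 * 1 := by
            exact mul_le_mul (hf a) (hg' a) (abs_nonneg _) zero_le_one
        _ = 1 := one_mul 1
    have hsum : Summable fun a => (μ a).toReal * (f a * g a) := summable_mul μ hfg
    have habs2 : Summable fun a => ‖(μ a).toReal * (f a * g a)‖ := by
      simpa only [Real.norm_eq_abs] using hsum.abs
    have h1 : |∑' a, (μ a).toReal * (f a * g a)| ≤ ∑' a, |(μ a).toReal * (f a * g a)| := by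
      have := norm_tsum_le_tsum_norm habs2
      simpa only [Real.norm_eq_abs] using this
    have h2 : ∑' a, |(μ a).toReal * (f a * g a)| ≤ pexp μ (fun x => |f x|) := by
      refine Summable.tsum_le_tsum (fun a => ?_) hsum.abs (summable_mul μ habs)
      rw [abs_mul, abs_of_nonneg ENNReal.toReal_nonneg, abs_mul]
      refine mul_le_mul_of_nonneg_left ?_ ENNReal.toReal_nonneg
      calc |f a| * |g a| ≤ |f a| * 1 := by
            exact mul_le_mul_of_nonneg_left (hg' a) (abs_nonneg _)
        _ = |f a| := mul_one _
    exact le_trans h1 h2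
  have hzero : (fun _ : X => (0:ℝ)) ∈ {d : X → ℝ | Dist1 d} := fun x => by
    constructor <;> norm_num
  have hne : ((fun g => |inn μ f g|) '' {d : X → ℝ | Dist1 d}).Nonempty :=
    ⟨_, Set.mem_image_of_mem _ hzero⟩
  refine le_antisymm ?_ ?_
  · refine csSup_le hne ?_
    rintro b ⟨g, hg, rfl⟩
    exact hbound g hg
  · set gs : X → ℝ := fun x => if 0 ≤ f x then 1 else -1 with hgs
    have hgsmem : gs ∈ {d : X → ℝ | Dist1 d} := by
      intro x
      by_cases h : 0 ≤ f x <;> simp [hgs, h] <;> norm_num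
    have hinn : inn μ f gs = pexp μ (fun x => |f x|) := by
      refine tsum_congr fun a => ?_
      congr 1
      by_cases h : 0 ≤ f a
      · simp [hgs, h, abs_of_nonneg h]
      · simp [hgs, h, abs_of_neg (lt_of_not_ge h)]
    have hpos : 0 ≤ pexp μ (fun x => |f x|) :=
      tsum_nonneg fun a => mul_nonneg ENNReal.toReal_nonneg (abs_nonneg _)
    have hmem : pexp μ (fun x => |f x|) ∈ (fun g => |inn μ f g|) '' {d : X → ℝ | Dist1 d} := by
      refine ⟨gs, hgsmem, ?_⟩
      show |inn μ f gs| = _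
      rw [hinn]
      exact abs_of_nonneg hpos
    refine le_csSup ⟨pexp μ (fun x => |f x|), ?_⟩ hmem
    rintro b ⟨g, hg, rfl⟩
    exact hbound g hg

lemma prob_univ (q : PMF α) : prob q Set.univ = 1 := by
  rw [prob, PMF.toOuterMeasure_apply]
  simpa using q.tsum_coe

lemma prob_mono (q : PMF α) {S T : Set α} (h : S ⊆ T) : prob q S ≤ prob q T :=
  q.toOuterMeasure.mono h

lemma prob_compl (q : PMF α) (S : Set α) {d : ℝ} (hd0 : 0 ≤ d) (hd1 : d ≤ 1)
    (hc : prob q Sᶜ ≤ ENNReal.ofReal d) : ENNReal.ofReal (1 - d) ≤ prob q S := by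
  have hsub : (1:ℝ≥0∞) ≤ prob q S + prob q Sᶜ := by
    rw [← prob_univ q, ← Set.union_compl_self S]
    exact MeasureTheory.measure_union_le _ _
  have h2 : ENNReal.ofReal (1 - d) + ENNReal.ofReal d ≤ prob q S + ENNReal.ofReal d := by
    rw [← ENNReal.ofReal_add (by linarith) hd0]
    have : (1 - d) + d = 1 := by ring
    rw [this, ENNReal.ofReal_one]
    exact le_trans hsub (add_le_add le_rfl hc)
  exact (ENNReal.add_le_add_iff_right ENNReal.ofReal_ne_top).1 h2


lemma bern_true {r : ℝ} (h1 : r ≤ 1) : bern r true = ENNReal.ofReal r := by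
  rw [bern, PMF.ofFintype_apply]
  simp [min_eq_left (ENNReal.ofReal_le_one.2 h1)]

lemma bern_false {r : ℝ} (h0 : 0 ≤ r) (h1 : r ≤ 1) : bern r false = ENNReal.ofReal (1 - r) := by
  rw [bern, PMF.ofFintype_apply]
  show 1 - min (ENNReal.ofReal r) 1 = ENNReal.ofReal (1 - r)
  rw [min_eq_left (ENNReal.ofReal_le_one.2 h1), ENNReal.ofReal_sub _ h0, ENNReal.ofReal_one]

lemma exDist_apply (μ : PMF X) (p : X → ℝ) (x₀ : X) (b : Bool) :
    exDist μ p (x₀, b) = μ x₀ * bern (p x₀) b := by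
  classical
  rw [exDist, PMF.bind_apply]
  have hterm : ∀ x : X, μ x * ((bern (p x)).map fun o => (x, o)) (x₀, b)
      = if x = x₀ then μ x₀ * bern (p x₀) b else 0 := by
    intro x
    by_cases hx : x = x₀
    · subst hx
      rw [if_pos rfl, PMF.map_apply]
      congr 1
      rw [tsum_eq_single b]
      · rw [if_pos rfl]
      · intro o ho
        rw [if_neg]
        intro h
        exact ho ((Prod.mk.injEq _ _ _ _ ▸ h : x = x ∧ b = o).2.symm)
    · rw [if_neg hx, PMF.map_apply]
      refine mul_eq_zero_of_right _ (ENNReal.tsum_eq_zero.2 fun o => ?_)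
      rw [if_neg]
      intro h
      exact hx ((Prod.mk.injEq _ _ _ _ ▸ h : x₀ = x ∧ b = o).1.symm)
  calc ∑' x, μ x * ((bern (p x)).map fun o => (x, o)) (x₀, b)
      = ∑' x, if x = x₀ then μ x₀ * bern (p x₀) b else 0 := tsum_congr hterm
    _ = μ x₀ * bern (p x₀) b := by
        rw [tsum_eq_single x₀]
        · rw [if_pos rfl]
        · intro x hx; rw [if_neg hx]

/-- The test statistic evaluated on a single sample. -/
def Zf (m : ℕ) : Cube m × Bool → ℝ :=
  fun s => if s.1 = none then (if s.2 then 1 else -1) else 0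

lemma Zf_abs (m : ℕ) : ∀ s, |Zf m s| ≤ 1 := by
  intro s; rw [Zf]; split_ifs <;> norm_num

lemma pexp_Z (m : ℕ) (μ : PMF (Cube m)) {p : Cube m → ℝ} (hp : Predictor p) :
    pexp (exDist μ p) (Zf m) = (μ none).toReal * (2 * p none - 1) := by
  have h0 := (hp none).1
  have h1 := (hp none).2
  classical
  have hv : ∀ a : Cube m × Bool,
      a ∉ ({((none : Cube m), true), ((none : Cube m), false)} : Finset (Cube m × Bool)) →
      (exDist μ p a).toReal * Zf m a = 0 := by
    rintro ⟨x, b⟩ ha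
    rcases x with _ | y
    · exfalso; apply ha; rcases b <;> simp
    · simp [Zf]
  rw [pexp, tsum_eq_sum hv, Finset.sum_pair (by simp)]
  rw [exDist_apply, exDist_apply, bern_true h1, bern_false h0 h1]
  have hZt : Zf m ((none : Cube m), true) = 1 := by simp [Zf]
  have hZf : Zf m ((none : Cube m), false) = -1 := by simp [Zf]
  rw [hZt, hZf, ENNReal.toReal_mul, ENNReal.toReal_mul, ENNReal.toReal_ofReal h0,
    ENNReal.toReal_ofReal (by linarith)]
  ring

lemma pexp_diff (m : ℕ) (μ : PMF (Cube m)) {p : Cube m → ℝ} (hp : Predictor p) :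
    pexp μ (fun x => |pLow m x - p x| - |pHigh m x - p x|)
      = (μ none).toReal * (2 * p none - 1) := by
  have h0 := (hp none).1
  have h1 := (hp none).2
  rw [pexp, tsum_eq_single none]
  · have hnone : |pLow m none - p none| - |pHigh m none - p none| = 2 * p none - 1 := by
      have hL : pLow m none = 0 := rfl
      have hH : pHigh m none = 1 := rfl
      rw [hL, hH, abs_of_nonpos (by linarith), abs_of_nonneg (by linarith)]
      ring
    rw [hnone]
  · intro x hx
    rcases x with _ | y
    · exact absurd rfl hx
    · have : pLow m (some y) = pHigh m (some y) := rfl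
      simp [this]

lemma pred_pLow (m : ℕ) : Predictor (pLow m) := by
  rintro (_ | y) <;> constructor <;> norm_num [pLow]

lemma pred_pHigh (m : ℕ) : Predictor (pHigh m) := by
  rintro (_ | y) <;> constructor <;> norm_num [pHigh]

lemma abs_pLow_sub {m : ℕ} {p : Cube m → ℝ} (hp : Predictor p) :
    ∀ x, |(pLow m - p) x| ≤ 1 := by
  intro x
  have h0 := (hp x).1
  have h1 := (hp x).2
  rw [Pi.sub_apply, abs_le]
  rcases x with _ | y <;> constructor <;> simp [pLow] <;> linarith

lemma abs_pHigh_sub {m : ℕ} {p : Cube m → ℝ} (hp : Predictor p) :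
    ∀ x, |(pHigh m - p) x| ≤ 1 := by
  intro x
  have h0 := (hp x).1
  have h1 := (hp x).2
  rw [Pi.sub_apply, abs_le]
  rcases x with _ | y <;> constructor <;> simp [pHigh] <;> linarith


lemma learner_exists (m : ℕ) {ε δ : ℝ} (hε0 : 0 < ε) (hε1 : ε < 1) (hδ0 : 0 < δ)
    (hδ1 : δ < 1) (n : ℕ) (hn : Real.exp (-(5 / 16 * ε ^ 2) * n) ≤ δ) :
    ∃ A : Learner (Cube m) n, DFAL {pLow m, pHigh m} {d : Cube m → ℝ | Dist1 d} ε δ n A := by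
  classical
  set dec : (Fin n → Cube m × Bool) → (Cube m → ℝ) :=
    fun v => if (∑ i, Zf m (v i)) ≤ 0 then pLow m else pHigh m with hdec
  refine ⟨fun v => PMF.pure (dec v), ?_⟩
  intro μ pstar hpstar
  rw [AchievesAg]
  set q1 := exDist μ pstar with hq1
  set t := (μ none).toReal * (2 * pstar none - 1) with ht
  set D : Set (Cube m → ℝ) := {d : Cube m → ℝ | Dist1 d} with hD
  have hLt : dnorm μ D (pLow m - pstar) = dnorm μ D (pHigh m - pstar) + t := by
    rw [hD, dnorm_eq_l1 μ (abs_pLow_sub hpstar), dnorm_eq_l1 μ (abs_pHigh_sub hpstar)]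
    have hsL : Summable fun a => (μ a).toReal * |(pLow m - pstar) a| :=
      summable_mul μ (fun a => by rw [abs_abs]; exact abs_pLow_sub hpstar a)
    have hsH : Summable fun a => (μ a).toReal * |(pHigh m - pstar) a| :=
      summable_mul μ (fun a => by rw [abs_abs]; exact abs_pHigh_sub hpstar a)
    have hdiff : pexp μ (fun x => |(pLow m - pstar) x|)
        - pexp μ (fun x => |(pHigh m - pstar) x|) = t := by
      rw [pexp, pexp, ← Summable.tsum_sub hsL hsH, ht, ← pexp_diff m μ hpstar, pexp]
      exact tsum_congr fun a => by rw [Pi.sub_apply, Pi.sub_apply]; ring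
    linarith
  have hag : agTarget μ {pLow m, pHigh m} D pstar
      = min (dnorm μ D (pLow m - pstar)) (dnorm μ D (pHigh m - pstar)) := by
    rw [agTarget, Set.image_pair]; exact csInf_pair _ _
  set S : Set (Cube m → ℝ) :=
    {p | Predictor p ∧ dnorm μ D (p - pstar) ≤ agTarget μ {pLow m, pHigh m} D pstar + ε}
    with hS
  have houtprob : prob (outDist μ pstar fun v => PMF.pure (dec v)) S
      = prob (iid q1 n) (dec ⁻¹' S) := by
    have hmap : outDist μ pstar (fun v => PMF.pure (dec v)) = (iid q1 n).map dec := rfl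
    rw [hmap, prob, PMF.toOuterMeasure_map_apply]
    rfl
  rw [houtprob]
  have hLmem : t ≤ ε → pLow m ∈ S := by
    intro h
    refine ⟨pred_pLow m, ?_⟩
    rw [hag]
    rcases min_cases (dnorm μ D (pLow m - pstar)) (dnorm μ D (pHigh m - pstar)) with
      ⟨heq, _⟩ | ⟨heq, _⟩ <;> rw [heq] <;> linarith
  have hHmem : -ε ≤ t → pHigh m ∈ S := by
    intro h
    refine ⟨pred_pHigh m, ?_⟩
    rw [hag]
    rcases min_cases (dnorm μ D (pLow m - pstar)) (dnorm μ D (pHigh m - pstar)) with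
      ⟨heq, _⟩ | ⟨heq, _⟩ <;> rw [heq] <;> linarith
  have hZt : pexp q1 (Zf m) = t := by rw [hq1, ht]; exact pexp_Z m μ hpstar
  rcases le_or_gt t ε with htle | htgt
  · rcases le_or_gt (-ε) t with htge | htlt
    · have huniv : dec ⁻¹' S = Set.univ := by
        ext v
        simp only [Set.mem_preimage, Set.mem_univ, iff_true, hdec]
        split_ifs
        · exact hLmem htle
        · exact hHmem htge
      rw [huniv, prob_univ]
      exact ENNReal.ofReal_le_one.2 (by linarith)
    · -- t < -ε : pLow is good, fail only if the sum is positive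
      have hgood := hLmem (by linarith)
      refine prob_compl _ _ hδ0.le hδ1.le ?_
      have hsub : (dec ⁻¹' S)ᶜ ⊆
          {v : Fin n → Cube m × Bool | ∑ i, (fun s => -(Zf m s)) (v i) ≤ 0} := by
        intro v hv
        simp only [Set.mem_compl_iff, Set.mem_preimage] at hv
        show (∑ i, -(Zf m (v i))) ≤ 0
        rw [Finset.sum_neg_distrib, neg_nonpos]
        by_contra hpos
        push_neg at hpos
        apply hv
        show dec v ∈ S
        rw [hdec]
        simp only [if_pos hpos.le]
        exact hgood
      refine le_trans (prob_mono _ hsub) (le_trans ?_ (ENNReal.ofReal_le_ofReal hn))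
      refine chernoff q1 (Z := fun s => -(Zf m s))
        (fun s => by rw [abs_neg]; exact Zf_abs m s) hε0 hε1.le ?_ n
      rw [show (fun s => -(Zf m s)) = (fun s => -(Zf m s)) from rfl, pexp_neg q1 (Zf m), hZt]
      linarith
  · -- ε < t : pHigh is good, fail only if the sum is nonpositive
    have hgood := hHmem (by linarith)
    refine prob_compl _ _ hδ0.le hδ1.le ?_
    have hsub : (dec ⁻¹' S)ᶜ ⊆ {v : Fin n → Cube m × Bool | ∑ i, Zf m (v i) ≤ 0} := by
      intro v hv
      simp only [Set.mem_compl_iff, Set.mem_preimage] at hv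
      show (∑ i, Zf m (v i)) ≤ 0
      by_contra hpos
      push_neg at hpos
      apply hv
      show dec v ∈ S
      rw [hdec]
      simp only [if_neg (not_le.2 hpos)]
      exact hgood
    refine le_trans (prob_mono _ hsub) (le_trans ?_ (ENNReal.ofReal_le_ofReal hn))
    refine chernoff q1 (Zf_abs m) hε0 hε1.le ?_ n
    rw [hZt]
    linarith

end Stmt16


/-- with `P = {p₁, p₂}` as above and `D = [−1,1]^X`, distribution-free agnostic
OI is solvable with `n = O(ε⁻² log(2/δ))` samples, uniformly in `m`. -/
theorem statement_16 :
    ∃ c : ℝ, 0 < c ∧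
      ∀ ε δ : ℝ, ε ∈ Set.Ioo (0 : ℝ) 1 → δ ∈ Set.Ioo (0 : ℝ) 1 →
        ∃ n : ℕ, 0 < n ∧ (n : ℝ) ≤ c * ε⁻¹ ^ 2 * Real.logb 2 (2 / δ) ∧
          ∀ m : ℕ, 0 < m →
            ∃ A : Learner (Cube m) n,
              DFAL {pLow m, pHigh m} {d : Cube m → ℝ | Dist1 d} ε δ n A := by
  refine ⟨20, by norm_num, ?_⟩
  rintro ε δ ⟨hε0, hε1⟩ ⟨hδ0, hδ1⟩
  have hεinv : 1 ≤ ε⁻¹ := by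
    rw [← one_div]
    exact (le_div_iff₀ hε0).2 (by linarith)
  have hε2 : 1 ≤ ε⁻¹ ^ 2 := by nlinarith
  have h2δ : (2:ℝ) ≤ 2 / δ := by
    rw [le_div_iff₀ hδ0]; nlinarith
  have hl2pos : (0:ℝ) < Real.log 2 := Real.log_pos (by norm_num)
  have hlog2 : Real.log 2 ≤ Real.log (2 / δ) := Real.log_le_log (by norm_num) h2δ
  have hlogpos : 0 < Real.log (2 / δ) := lt_of_lt_of_le hl2pos hlog2
  set x := 4 * ε⁻¹ ^ 2 * Real.log (2 / δ) with hx
  have hgt : (0.6931471803 : ℝ) < Real.log 2 := Real.log_two_gt_d9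
  have hlt : Real.log 2 < 0.6931471808 := Real.log_two_lt_d9
  have hx1 : 1 ≤ x := by
    rw [hx]; nlinarith
  refine ⟨⌈x⌉₊, Nat.ceil_pos.2 (by nlinarith), ?_, ?_⟩
  · have hceil : (⌈x⌉₊ : ℝ) < x + 1 := Nat.ceil_lt_add_one (by nlinarith)
    have hdivge : Real.log (2 / δ) ≤ Real.log (2 / δ) / Real.log 2 := by
      rw [le_div_iff₀ hl2pos]; nlinarith
    have hstep : x + 1 ≤ 20 * ε⁻¹ ^ 2 * (Real.log (2 / δ) / Real.log 2) := by
      have h8 : x + 1 ≤ 2 * x := by linarith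
      have h9 : 2 * x ≤ 20 * ε⁻¹ ^ 2 * Real.log (2 / δ) := by rw [hx]; nlinarith
      have h10 : 20 * ε⁻¹ ^ 2 * Real.log (2 / δ)
          ≤ 20 * ε⁻¹ ^ 2 * (Real.log (2 / δ) / Real.log 2) := by
        refine mul_le_mul_of_nonneg_left hdivge (by positivity)
      linarith
    rw [Real.logb]
    linarith
  · intro m hm
    apply Stmt16.learner_exists m hε0 hε1 hδ0 hδ1
    have hceil : x ≤ (⌈x⌉₊ : ℝ) := Nat.le_ceil x
    rw [← Real.exp_log hδ0]
    apply Real.exp_le_exp.2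
    have hlogd : Real.log (2 / δ) = Real.log 2 - Real.log δ :=
      Real.log_div (by norm_num) (ne_of_gt hδ0)
    have hcancel : ε ^ 2 * ε⁻¹ ^ 2 = 1 := by
      field_simp
    have hkey : ε ^ 2 * x = 4 * Real.log (2 / δ) := by
      rw [hx]; nlinarith
    nlinarith [mul_le_mul_of_nonneg_left hceil (sq_nonneg ε)]
end
end
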